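/- arXiv:1012.1585 — 4 statements merged into one kernel-verified Lean document; each statement's English description precedes it below -/
import Mathlib

section
/- For s > 0 and integers k ≥ 0, the integrals λ_k = ∫_ℝ ((i−u)/√(1+u²))^{2k} · (1+u²)^{−(1/2+s)} du satisfy the recursion λ_{k+1} = ((k + 1/2 − s)/(k + 1/2 + s)) · λ_k. -/
open MeasureTheory Complex Filter

set_option maxHeartbeats 1000000

/-- Recursion for the intertwining coefficients
`λ_k = ∫_ℝ ((i−u)/√(1+u²))^{2k} (1+u²)^{−(1/2+s)} du`. -/
theorem stmt_0 (s : ℝ) (hs : 0 < s) (k : ℕ) :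
    (∫ u : ℝ, ((Complex.I - (u : ℂ)) / (Real.sqrt (1 + u ^ 2) : ℂ)) ^ (2 * (k + 1)) *
        ((1 + u ^ 2) ^ (-(1 / 2 + s)) : ℝ)) =
      (((k : ℝ) + 1 / 2 - s) / ((k : ℝ) + 1 / 2 + s) : ℝ) *
        ∫ u : ℝ, ((Complex.I - (u : ℂ)) / (Real.sqrt (1 + u ^ 2) : ℂ)) ^ (2 * k) *
          ((1 + u ^ 2) ^ (-(1 / 2 + s)) : ℝ) := by
  have hpos : ∀ u : ℝ, (0:ℝ) < 1 + u ^ 2 := fun u => by positivity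
  set p : ℝ := -(1/2 + s) with hp
  have hne1 : ∀ u : ℝ, (u : ℂ) - Complex.I ≠ 0 := fun u h => by
    have := congrArg Complex.im h; simp at this
  have hne2 : ∀ u : ℝ, (u : ℂ) + Complex.I ≠ 0 := fun u h => by
    have := congrArg Complex.im h; simp at this
  have hcast : ∀ u : ℝ, ((1 + u^2 : ℝ) : ℂ) =
      ((u:ℂ) + Complex.I) * ((u:ℂ) - Complex.I) := fun u => by
    have : Complex.I ^ 2 = -1 := Complex.I_sq
    push_cast; ring_nf; rw [Complex.I_sq]; ring
  set w : ℝ → ℝ := fun u => (1 + u ^ 2) ^ p with hwdef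
  set f : ℕ → ℝ → ℂ := fun m u =>
    (((u:ℂ) - Complex.I)/((u:ℂ) + Complex.I)) ^ m * (w u : ℂ) with hfdef
  have key : ∀ (m : ℕ) (u : ℝ),
      ((Complex.I - (u:ℂ)) / (Real.sqrt (1 + u ^ 2) : ℂ)) ^ (2 * m) *
        ((1 + u ^ 2) ^ p : ℝ) = f m u := by
    intro m u
    have hsq : ((Real.sqrt (1 + u^2) : ℝ) : ℂ)^2 = ((1 + u^2 : ℝ) : ℂ) := by
      norm_cast; exact Real.sq_sqrt (hpos u).le
    have : ((Complex.I - (u:ℂ)) / (Real.sqrt (1 + u ^ 2) : ℂ)) ^ 2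
        = ((u:ℂ) - Complex.I)/((u:ℂ) + Complex.I) := by
      rw [div_pow, hsq, hcast u]
      have hI : Complex.I ^ 2 = -1 := Complex.I_sq
      field_simp [hne1 u, hne2 u]
      ring_nf
    rw [pow_mul, this, hfdef]
  -- the antiderivative
  set F : ℝ → ℂ := fun u =>
    (((u:ℂ) - Complex.I) ^ (k+1) * ((u:ℂ) + Complex.I)) / ((u:ℂ) + Complex.I) ^ (k+1)
      * (w u : ℂ) with hFdef
  set c1 : ℂ := ((k + 1/2 - s : ℝ) : ℂ) with hc1
  set c2 : ℂ := ((k + 1/2 + s : ℝ) : ℂ) with hc2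
  set g : ℝ → ℂ := fun u => c1 * f k u - c2 * f (k+1) u with hgdef
  have hF : ∀ u : ℝ, HasDerivAt F (g u) u := by
    intro u
    have hz1 : HasDerivAt (fun z : ℂ => (z - Complex.I) ^ (k+1))
        (↑(k+1) * ((u:ℂ) - Complex.I) ^ (k+1-1) * 1) (u:ℂ) := by
      exact ((hasDerivAt_id _).sub_const Complex.I).pow (k+1)
    have hz2 : HasDerivAt (fun z : ℂ => z + Complex.I) 1 (u:ℂ) :=
      (hasDerivAt_id _).add_const Complex.I
    have hznum := hz1.mul hz2
    have hzden : HasDerivAt (fun z : ℂ => (z + Complex.I) ^ (k+1))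
        (↑(k+1) * ((u:ℂ) + Complex.I) ^ (k+1-1) * 1) (u:ℂ) := hz2.pow (k+1)
    have hzq := hznum.div hzden (pow_ne_zero _ (hne2 u))
    have hw' : HasDerivAt w (p * (1 + u^2) ^ (p-1) * (2*u)) u := by
      have hb : HasDerivAt (fun u : ℝ => 1 + u ^ 2) (2*u) u := by
        simpa using ((hasDerivAt_pow 2 u).const_add 1)
      exact (Real.hasDerivAt_rpow_const (Or.inl (hpos u).ne')).comp u hb
    have hwc : HasDerivAt (fun u : ℝ => ((w u : ℝ) : ℂ))
        ((p * (1 + u^2) ^ (p-1) * (2*u) : ℝ) : ℂ) u := hw'.ofReal_comp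
    have hq := hzq.comp_ofReal.mul hwc
    refine hq.congr_deriv ?_
    symm
    simp only [Pi.mul_apply, Pi.div_apply]
    have hrw : ((1 + u^2 : ℝ) ^ (p-1) : ℝ) = w u / (1 + u^2) := by
      rw [Real.rpow_sub (hpos u), Real.rpow_one]
    have e1 : ((p * (1 + u^2) ^ (p-1) * (2*u) : ℝ) : ℂ)
        = (p : ℂ) * ((w u : ℂ) / (((u:ℂ) + Complex.I) * ((u:ℂ) - Complex.I))) * (2*(u:ℂ)) := by
      rw [hrw, Complex.ofReal_mul, Complex.ofReal_mul, Complex.ofReal_div, hcast u,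
        Complex.ofReal_mul]
      push_cast; ring
    rw [hgdef, hfdef, hc1, hc2]
    simp only [Nat.add_sub_cancel, mul_one, div_pow, e1]
    simp only [pow_succ, hp]
    push_cast
    have hY1 : ((u:ℂ) + Complex.I) ^ k ≠ 0 := pow_ne_zero _ (hne2 u)
    have hX1 : ((u:ℂ) - Complex.I) ^ k ≠ 0 := pow_ne_zero _ (hne1 u)
    field_simp [hY1, hX1, hne1 u, hne2 u]
    ring
  have hwint : Integrable w := by
    have h1 : ((Module.finrank ℝ ℝ : ℕ) : ℝ) < 1 + 2*s := by
      simp [Module.finrank_self]; linarith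
    have h2 := integrable_rpow_neg_one_add_norm_sq (E := ℝ) (μ := volume) h1
    refine h2.congr (Eventually.of_forall fun x => ?_)
    simp only [Real.norm_eq_abs, _root_.sq_abs, hwdef]
    congr 1
    first
    | (rw [hp]; ring)
    | ring
  have hwnn : ∀ u : ℝ, 0 ≤ w u := fun u => Real.rpow_nonneg (hpos u).le _
  have habs : ∀ u : ℝ, ‖(u:ℂ) - Complex.I‖ = Real.sqrt (1 + u^2) := by
    intro u
    rw [Complex.norm_def, Complex.normSq_apply]
    simp
    congr 1
    ring
  have habs' : ∀ u : ℝ, ‖(u:ℂ) + Complex.I‖ = Real.sqrt (1 + u^2) := by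
    intro u
    rw [Complex.norm_def, Complex.normSq_apply]
    simp
    congr 1
    ring
  have hnorm_f : ∀ (m : ℕ) (u : ℝ), ‖f m u‖ = w u := by
    intro m u
    have h1 : ‖(((u:ℂ) - Complex.I)/((u:ℂ) + Complex.I))‖ = 1 := by
      rw [norm_div, habs u, habs' u, div_self]
      exact ne_of_gt (Real.sqrt_pos.mpr (hpos u))
    rw [hfdef]
    simp only [norm_mul, norm_pow, h1, one_pow, one_mul, Complex.norm_real,
      Real.norm_eq_abs]
    exact _root_.abs_of_nonneg (hwnn u)
  have hcontw : Continuous w := by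
    rw [hwdef]
    exact (continuous_const.add (continuous_pow 2)).rpow_const fun x => Or.inl (hpos x).ne'
  have hcont_f : ∀ m : ℕ, Continuous (f m) := by
    intro m
    rw [hfdef]
    exact ((Continuous.div (Complex.continuous_ofReal.sub continuous_const)
      (Complex.continuous_ofReal.add continuous_const) hne2).pow m).mul
      (Complex.continuous_ofReal.comp hcontw)
  have hfint : ∀ m : ℕ, Integrable (f m) := fun m =>
    hwint.mono' (hcont_f m).aestronglyMeasurable
      (Eventually.of_forall fun u => le_of_eq (hnorm_f m u))
  have hgint : Integrable g := by
    rw [hgdef]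
    exact ((hfint k).const_mul c1).sub ((hfint (k+1)).const_mul c2)
  have hFnorm : ∀ u : ℝ, ‖F u‖ = (1 + u^2) ^ (-s) := by
    intro u
    have hs0 : Real.sqrt (1+u^2) ≠ 0 := ne_of_gt (Real.sqrt_pos.mpr (hpos u))
    rw [hFdef]
    simp only [norm_mul, norm_div, norm_pow, habs u, habs' u,
      Complex.norm_real, Real.norm_eq_abs]
    rw [_root_.abs_of_nonneg (hwnn u)]
    have h2 : Real.sqrt (1+u^2) ^ (k+1) * Real.sqrt (1+u^2) / Real.sqrt (1+u^2) ^ (k+1)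
        = Real.sqrt (1+u^2) := by field_simp
    rw [h2, Real.sqrt_eq_rpow, hwdef]
    rw [← Real.rpow_add (hpos u)]
    congr 1
    rw [hp]; ring
  have hbase : Tendsto (fun u : ℝ => (1 : ℝ) + u^2) atTop atTop :=
    tendsto_atTop_add_const_left _ 1 (tendsto_pow_atTop two_ne_zero)
  have hbase' : Tendsto (fun u : ℝ => (1 : ℝ) + u^2) atBot atTop := by
    refine tendsto_atTop_add_const_left _ 1 ?_
    have h2 : Tendsto (fun u : ℝ => u * u) atBot atTop :=
      tendsto_id.atBot_mul_atBot₀ tendsto_id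
    refine h2.congr fun u => (sq u).symm
  have hFtop : Tendsto F atTop (nhds 0) :=
    squeeze_zero_norm (fun u => (hFnorm u).le) ((tendsto_rpow_neg_atTop hs).comp hbase)
  have hFbot : Tendsto F atBot (nhds 0) :=
    squeeze_zero_norm (fun u => (hFnorm u).le) ((tendsto_rpow_neg_atTop hs).comp hbase')
  have hIoi : ∫ x in Set.Ioi (0:ℝ), g x = 0 - F 0 :=
    MeasureTheory.integral_Ioi_of_hasDerivAt_of_tendsto
      (hF 0).continuousAt.continuousWithinAt (fun x _ => hF x) hgint.integrableOn hFtop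
  have hIic : ∫ x in Set.Iic (0:ℝ), g x = F 0 - 0 :=
    MeasureTheory.integral_Iic_of_hasDerivAt_of_tendsto
      (hF 0).continuousAt.continuousWithinAt (fun x _ => hF x) hgint.integrableOn hFbot
  have htot : ∫ u : ℝ, g u = 0 := by
    rw [← intervalIntegral.integral_Iic_add_Ioi hgint.integrableOn hgint.integrableOn, hIic, hIoi]
    ring
  have hsplit : ∫ u : ℝ, g u = c1 * (∫ u : ℝ, f k u) - c2 * ∫ u : ℝ, f (k+1) u := by
    rw [hgdef]
    rw [integral_sub ((hfint k).const_mul c1) ((hfint (k+1)).const_mul c2),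
      integral_const_mul, integral_const_mul]
  have hmain : c2 * ∫ u : ℝ, f (k+1) u = c1 * ∫ u : ℝ, f k u := by
    rw [hsplit] at htot
    linear_combination -htot
  have hc2ne : c2 ≠ 0 := by
    rw [hc2]
    exact Complex.ofReal_ne_zero.mpr (by positivity)
  simp_rw [key]
  have hco : ((((k:ℝ) + 1/2 - s)/((k:ℝ) + 1/2 + s) : ℝ) : ℂ) = c1 / c2 := by
    rw [hc1, hc2, Complex.ofReal_div]
  rw [hco, div_mul_eq_mul_div, eq_div_iff hc2ne]
  linear_combination hmain
end

section
/- Let H be a real Hilbert space with unit vector u, and define the bilinear form B(v₁ + t₁u, v₂ + t₂u) = t₁t₂ − ⟨v₁, v₂⟩ for v₁, v₂ ⊥ u. Then the set H∞ = {v ∈ H : B(v,v) = 1, B(v,u) > 0} with d(x,y) = arcosh(B(x,y)) is a metric space; in particular B(x,y) ≥ 1 for all x, y ∈ H∞, with equality iff x = y, and the triangle inequality holds. -/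
open scoped RealInnerProductSpace

/-- Inverse hyperbolic cosine. -/
noncomputable def arcosh (x : ℝ) : ℝ := Real.log (x + Real.sqrt (x ^ 2 - 1))

lemma arcosh_mono' {a b : ℝ} (ha : 1 ≤ a) (hab : a ≤ b) : arcosh a ≤ arcosh b := by
  have h0 : (0:ℝ) < a + Real.sqrt (a ^ 2 - 1) := by
    have : 0 ≤ Real.sqrt (a ^ 2 - 1) := Real.sqrt_nonneg _
    linarith
  apply Real.log_le_log h0
  have : Real.sqrt (a ^ 2 - 1) ≤ Real.sqrt (b ^ 2 - 1) :=
    Real.sqrt_le_sqrt (by nlinarith)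
  linarith

lemma arcosh_add' {c e : ℝ} (hc : 1 ≤ c) (he : 1 ≤ e) :
    arcosh (c * e + Real.sqrt (c ^ 2 - 1) * Real.sqrt (e ^ 2 - 1)) = arcosh c + arcosh e := by
  set sc := Real.sqrt (c ^ 2 - 1) with hsc
  set se := Real.sqrt (e ^ 2 - 1) with hse
  have hsc0 : 0 ≤ sc := Real.sqrt_nonneg _
  have hse0 : 0 ≤ se := Real.sqrt_nonneg _
  have hsc2 : sc ^ 2 = c ^ 2 - 1 := Real.sq_sqrt (by nlinarith)
  have hse2 : se ^ 2 = e ^ 2 - 1 := Real.sq_sqrt (by nlinarith)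
  have hD : ((c * e + sc * se) ^ 2 - 1) = (c * se + e * sc) ^ 2 := by nlinarith [hsc2, hse2]
  have hroot : Real.sqrt ((c * e + sc * se) ^ 2 - 1) = c * se + e * sc := by
    rw [hD, Real.sqrt_sq (by positivity)]
  unfold arcosh
  rw [hroot, ← hsc, ← hse]
  have h1 : (0:ℝ) < c + sc := by linarith
  have h2 : (0:ℝ) < e + se := by linarith
  rw [← Real.log_mul (ne_of_gt h1) (ne_of_gt h2)]
  congr 1
  ring

set_option maxHeartbeats 1600000 in
/-- The infinite-dimensional hyperboloid `{v | B v v = 1, B v u > 0}` with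
`d(x,y) = arcosh (B x y)` is a metric space: `B x y ≥ 1`, with equality iff `x = y`,
and the triangle inequality holds for `arcosh ∘ B`. -/
theorem stmt_4 {H : Type*} [NormedAddCommGroup H] [InnerProductSpace ℝ H] [CompleteSpace H]
    (u : H) (hu : ‖u‖ = 1)
    (B : H → H → ℝ)
    (hB : ∀ (v₁ v₂ : H) (t₁ t₂ : ℝ), ⟪v₁, u⟫ = 0 → ⟪v₂, u⟫ = 0 →
      B (v₁ + t₁ • u) (v₂ + t₂ • u) = t₁ * t₂ - ⟪v₁, v₂⟫)
    (S : Set H) (hS : S = {v : H | B v v = 1 ∧ 0 < B v u}) :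
    (∀ x ∈ S, ∀ y ∈ S, 1 ≤ B x y) ∧
    (∀ x ∈ S, ∀ y ∈ S, (B x y = 1 ↔ x = y)) ∧
    (∀ x ∈ S, ∀ y ∈ S, ∀ z ∈ S,
      arcosh (B x z) ≤ arcosh (B x y) + arcosh (B y z)) := by
  have huu : ⟪u, u⟫ = (1:ℝ) := by
    rw [real_inner_self_eq_norm_sq, hu]; norm_num
  -- closed formula for B
  have key : ∀ x y : H, B x y = 2 * ⟪x, u⟫ * ⟪y, u⟫ - ⟪x, y⟫ := by
    intro x y
    have h1 : ⟪x - ⟪x, u⟫ • u, u⟫ = (0:ℝ) := by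
      simp [inner_sub_left, real_inner_smul_left, huu, hu]
    have h2 : ⟪y - ⟪y, u⟫ • u, u⟫ = (0:ℝ) := by
      simp [inner_sub_left, real_inner_smul_left, huu, hu]
    have h := hB (x - ⟪x, u⟫ • u) (y - ⟪y, u⟫ • u) ⟪x, u⟫ ⟪y, u⟫ h1 h2
    rw [sub_add_cancel, sub_add_cancel] at h
    rw [h]
    simp [inner_sub_left, inner_sub_right, real_inner_smul_left, real_inner_smul_right, huu, hu,
      real_inner_comm u y]
    ring
  -- projection facts
  have hpn : ∀ x : H, ‖x - ⟪x, u⟫ • u‖ ^ 2 = ‖x‖ ^ 2 - ⟪x, u⟫ ^ 2 := by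
    intro x
    rw [← real_inner_self_eq_norm_sq, ← real_inner_self_eq_norm_sq]
    simp only [inner_sub_left, inner_sub_right, real_inner_smul_left, real_inner_smul_right, huu,
      real_inner_comm u x]
    ring
  have hip : ∀ x y : H, ⟪x - ⟪x, u⟫ • u, y - ⟪y, u⟫ • u⟫ = ⟪x, y⟫ - ⟪x, u⟫ * ⟪y, u⟫ := by
    intro x y
    simp [inner_sub_left, inner_sub_right, real_inner_smul_left, real_inner_smul_right, huu, hu,
      real_inner_comm u y]
  -- facts about members of S
  have hmem : ∀ x ∈ S, 0 < ⟪x, u⟫ ∧ ⟪x, u⟫ ^ 2 = 1 + ‖x - ⟪x, u⟫ • u‖ ^ 2 := by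
    intro x hx
    rw [hS] at hx
    obtain ⟨hx1, hx2⟩ := hx
    have hBxu : B x u = ⟪x, u⟫ := by rw [key]; rw [huu]; ring
    have hBxx : 2 * ⟪x, u⟫ ^ 2 - ‖x‖ ^ 2 = 1 := by
      have := hx1; rw [key x x, real_inner_self_eq_norm_sq] at this; nlinarith [this]
    constructor
    · rw [hBxu] at hx2; exact hx2
    · rw [hpn]; nlinarith [hBxx]
  -- part 1 core
  have ge_one : ∀ x ∈ S, ∀ y ∈ S, 1 ≤ B x y := by
    intro x hx y hy
    obtain ⟨htx, hax⟩ := hmem x hx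
    obtain ⟨hty, hay⟩ := hmem y hy
    set a := ‖x - ⟪x, u⟫ • u‖ with ha
    set b := ‖y - ⟪y, u⟫ • u‖ with hb
    have ha0 : 0 ≤ a := norm_nonneg _
    have hb0 : 0 ≤ b := norm_nonneg _
    have hcs : ⟪x - ⟪x, u⟫ • u, y - ⟪y, u⟫ • u⟫ ≤ a * b := real_inner_le_norm _ _
    rw [hip] at hcs
    rw [key]
    nlinarith [sq_nonneg (a - b), sq_nonneg (⟪x, u⟫ * ⟪y, u⟫ - 1 - a * b),
      mul_pos htx hty, mul_nonneg ha0 hb0]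
  -- symmetry
  have Bcomm : ∀ x y : H, B x y = B y x := by
    intro x y; rw [key, key, real_inner_comm x y]; ring
  -- bilinearity (subtraction form)
  have Bsub : ∀ (w₁ w₂ w₃ : H) (r : ℝ), B (w₁ - r • w₂) w₃ = B w₁ w₃ - r * B w₂ w₃ := by
    intro w₁ w₂ w₃ r
    rw [key, key, key, inner_sub_left, inner_sub_left, real_inner_smul_left,
      real_inner_smul_left]
    ring
  have Bsub' : ∀ (w₁ w₂ w₃ : H) (r : ℝ), B w₃ (w₁ - r • w₂) = B w₃ w₁ - r * B w₃ w₂ := by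
    intro w₁ w₂ w₃ r
    rw [key, key, key, inner_sub_right, inner_sub_left, real_inner_smul_right,
      real_inner_smul_left]
    ring
  refine ⟨ge_one, ?_, ?_⟩
  · -- equality iff
    intro x hx y hy
    constructor
    · intro h1
      obtain ⟨htx, hax⟩ := hmem x hx
      obtain ⟨hty, hay⟩ := hmem y hy
      set a := ‖x - ⟪x, u⟫ • u‖ with ha
      set b := ‖y - ⟪y, u⟫ • u‖ with hb
      have ha0 : 0 ≤ a := norm_nonneg _
      have hb0 : 0 ≤ b := norm_nonneg _
      have hcs : ⟪x - ⟪x, u⟫ • u, y - ⟪y, u⟫ • u⟫ ≤ a * b := real_inner_le_norm _ _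
      rw [hip] at hcs
      have hBxy : 2 * ⟪x, u⟫ * ⟪y, u⟫ - ⟪x, y⟫ = 1 := by rw [← key]; exact h1
      -- derive a = b
      have hPQ : ⟪x, u⟫ * ⟪y, u⟫ ≥ 1 + a * b := by
        nlinarith [sq_nonneg (a - b), sq_nonneg (⟪x, u⟫ * ⟪y, u⟫ - 1 - a * b),
          mul_pos htx hty, mul_nonneg ha0 hb0]
      have hipeq : ⟪x, y⟫ - ⟪x, u⟫ * ⟪y, u⟫ = a * b := by nlinarith
      have hPeq : ⟪x, u⟫ * ⟪y, u⟫ = 1 + a * b := by nlinarith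
      have hab : a = b := by nlinarith [sq_nonneg (a - b), mul_pos htx hty]
      have htxy : ⟪x, u⟫ = ⟪y, u⟫ := by nlinarith [sq_nonneg (⟪x, u⟫ - ⟪y, u⟫)]
      -- Cauchy-Schwarz equality
      have hinner : ⟪x - ⟪x, u⟫ • u, y - ⟪y, u⟫ • u⟫ = a * b := by rw [hip]; linarith
      have hpeq : x - ⟪x, u⟫ • u = y - ⟪y, u⟫ • u := by
        rcases eq_or_lt_of_le ha0 with h0 | h0
        · have hA : a = 0 := h0.symm
          have h1 : x - ⟪x, u⟫ • u = 0 := by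
            rwa [← norm_eq_zero, ← ha]
          have h2 : y - ⟪y, u⟫ • u = 0 := by
            rw [← norm_eq_zero, ← hb, ← hab]; exact hA
          rw [h1, h2]
        · have hEq : ⟪x - ⟪x, u⟫ • u, y - ⟪y, u⟫ • u⟫ = a * b := hinner
          rw [show a * b = ‖x - ⟪x, u⟫ • u‖ * ‖y - ⟪y, u⟫ • u‖ from rfl] at hEq
          have := (inner_eq_norm_mul_iff_real).mp hEq
          rw [← hb, ← ha, ← hab] at this
          exact smul_right_injective H (ne_of_gt h0) this
      have : x - ⟪x, u⟫ • u + ⟪x, u⟫ • u = y - ⟪y, u⟫ • u + ⟪y, u⟫ • u := by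
        rw [hpeq, htxy]
      simpa [sub_add_cancel] using this
    · intro h; subst h
      rw [hS] at hx; exact hx.1
  · -- triangle inequality
    intro x hx y hy z hz
    have hc1 : 1 ≤ B x y := ge_one x hx y hy
    have he1 : 1 ≤ B y z := ge_one y hy z hz
    have hyy : B y y = 1 := by rw [hS] at hy; exact hy.1
    have hxx : B x x = 1 := by rw [hS] at hx; exact hx.1
    have hzz : B z z = 1 := by rw [hS] at hz; exact hz.1
    obtain ⟨x', hx'⟩ : ∃ w : H, w = x - B x y • y := ⟨_, rfl⟩
    obtain ⟨z', hz'⟩ : ∃ w : H, w = z - B y z • y := ⟨_, rfl⟩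
    have hx'y : B x' y = 0 := by rw [hx', Bsub, hyy]; ring
    have hz'y : B z' y = 0 := by rw [hz', Bsub, hyy, Bcomm z y]; ring
    have hx'x' : B x' x' = 1 - (B x y) ^ 2 := by
      rw [hx', Bsub, Bsub', Bsub', hxx, hyy, Bcomm y x]; ring
    have hz'z' : B z' z' = 1 - (B y z) ^ 2 := by
      rw [hz', Bsub, Bsub', Bsub', hzz, hyy, Bcomm z y]; ring
    have hx'z' : B x' z' = B x z - B x y * B y z := by
      rw [hx', hz', Bsub, Bsub', Bsub', hyy]; ring
    -- negative semidefiniteness on the B-orthogonal complement of y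
    have hneg : ∀ w : H, B w y = 0 → B w w ≤ 0 := by
      intro w hw
      obtain ⟨hty, hay⟩ := hmem y hy
      have hw' : ⟪w, u⟫ * ⟪y, u⟫ = ⟪w, y⟫ - ⟪w, u⟫ * ⟪y, u⟫ := by
        rw [key] at hw; linarith
      have hcs : (⟪w, y⟫ - ⟪w, u⟫ * ⟪y, u⟫) ^ 2 ≤
          ‖w - ⟪w, u⟫ • u‖ ^ 2 * ‖y - ⟪y, u⟫ • u‖ ^ 2 := by
        have h := abs_real_inner_le_norm (w - ⟪w, u⟫ • u) (y - ⟪y, u⟫ • u)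
        rw [hip] at h
        nlinarith [h, abs_nonneg (⟪w, y⟫ - ⟪w, u⟫ * ⟪y, u⟫), sq_abs (⟪w, y⟫ - ⟪w, u⟫ * ⟪y, u⟫),
          norm_nonneg (w - ⟪w, u⟫ • u), norm_nonneg (y - ⟪y, u⟫ • u)]
      rw [← hw'] at hcs
      have hwn : ‖w - ⟪w, u⟫ • u‖ ^ 2 = ‖w‖ ^ 2 - ⟪w, u⟫ ^ 2 := hpn w
      rw [key, real_inner_self_eq_norm_sq]
      nlinarith [hcs, hwn, hay, mul_pos hty hty, sq_nonneg (⟪w, u⟫ * ⟪y, u⟫),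
        sq_nonneg ‖w - ⟪w, u⟫ • u‖, sq_nonneg ‖y - ⟪y, u⟫ • u‖]
    -- reverse Cauchy-Schwarz
    have hrcs : (B x' z') ^ 2 ≤ ((B x y) ^ 2 - 1) * ((B y z) ^ 2 - 1) := by
      have hq : ∀ r : ℝ, (1 - (B y z) ^ 2) * r ^ 2 - 2 * r * B x' z' + (1 - (B x y) ^ 2) ≤ 0 := by
        intro r
        have h1 : B (x' - r • z') y = 0 := by rw [Bsub, hx'y, hz'y]; ring
        have h2 := hneg (x' - r • z') h1
        rw [Bsub, Bsub', Bsub', hx'x', hz'z', Bcomm z' x'] at h2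
        nlinarith [h2]
      rcases eq_or_lt_of_le he1 with he' | he'
      · -- B y z = 1
        have hE : B y z = 1 := he'.symm
        have hC : B x' z' = 0 := by
          by_contra hC0
          have h := hq (((B x y) ^ 2 - 1 + 1) / (2 * B x' z') * (-1))
          rw [hE] at h
          have h2 : 2 * (((B x y) ^ 2 - 1 + 1) / (2 * B x' z') * (-1)) * B x' z'
              = -((B x y) ^ 2 - 1 + 1) := by field_simp
          nlinarith [h, h2]
        rw [hC, hE]; nlinarith
      · have hee : 0 < (B y z) ^ 2 - 1 := by nlinarith
        have h := hq (- (B x' z') / ((B y z) ^ 2 - 1))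
        have h2 : (1 - (B y z) ^ 2) * (- (B x' z') / ((B y z) ^ 2 - 1)) ^ 2
            - 2 * (- (B x' z') / ((B y z) ^ 2 - 1)) * B x' z' + (1 - (B x y) ^ 2)
            = (B x' z') ^ 2 / ((B y z) ^ 2 - 1) + (1 - (B x y) ^ 2) := by
          field_simp
          ring
        rw [h2] at h
        have := (div_le_iff₀ hee).mp
          (by linarith : (B x' z') ^ 2 / ((B y z) ^ 2 - 1) ≤ (B x y) ^ 2 - 1)
        linarith [this]
    -- main estimate
    have hmain : B x z ≤ B x y * B y z
        + Real.sqrt ((B x y) ^ 2 - 1) * Real.sqrt ((B y z) ^ 2 - 1) := by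
      have hsq : Real.sqrt ((B x y) ^ 2 - 1) * Real.sqrt ((B y z) ^ 2 - 1)
          = Real.sqrt (((B x y) ^ 2 - 1) * ((B y z) ^ 2 - 1)) := by
        rw [← Real.sqrt_mul (by nlinarith)]
      have h1 : B x' z' ≤ Real.sqrt (((B x y) ^ 2 - 1) * ((B y z) ^ 2 - 1)) := by
        calc B x' z' ≤ |B x' z'| := le_abs_self _
          _ = Real.sqrt ((B x' z') ^ 2) := (Real.sqrt_sq_eq_abs _).symm
          _ ≤ Real.sqrt (((B x y) ^ 2 - 1) * ((B y z) ^ 2 - 1)) := Real.sqrt_le_sqrt hrcs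
      rw [hsq]
      rw [hx'z'] at h1
      linarith
    have hxz1 : 1 ≤ B x z := ge_one x hx z hz
    calc arcosh (B x z)
        ≤ arcosh (B x y * B y z
            + Real.sqrt ((B x y) ^ 2 - 1) * Real.sqrt ((B y z) ^ 2 - 1)) :=
          arcosh_mono' hxz1 hmain
      _ = arcosh (B x y) + arcosh (B y z) := arcosh_add' hc1 he1
end

section
/- For real s and t, with u(s,t) = (1/2π) ∫₀^{2π} |sinh(t) e^{iθ} + cosh(t)|^{−(1+2s)} dθ, one has the second-order expansion u(s,t) = 1 + (1+2s)(s/2 − 1/4) t² + o(t²) as t → 0. -/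
open Asymptotics

noncomputable section StmtAux

/-- base function -/
def ccS (t θ : ℝ) : ℝ := Real.cosh (2*t) + Real.sinh (2*t) * Real.cos θ
/-- its t-derivative -/
def cdS (t θ : ℝ) : ℝ := Real.sinh (2*t) * 2 + Real.cosh (2*t) * 2 * Real.cos θ
/-- second t-derivative -/
def ceS (t θ : ℝ) : ℝ := Real.cosh (2*t) * 2 * 2 + Real.sinh (2*t) * 2 * 2 * Real.cos θ

lemma ccS_pos (t θ : ℝ) : 0 < ccS t θ := by
  have h1 : |Real.sinh (2*t) * Real.cos θ| ≤ |Real.sinh (2*t)| := by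
    rw [abs_mul]
    exact mul_le_of_le_one_right (abs_nonneg _) (Real.abs_cos_le_one θ)
  have h2 : |Real.sinh (2*t)| < Real.cosh (2*t) := by
    rw [Real.abs_sinh, ← Real.cosh_abs (2*t)]
    have := Real.cosh_sub_sinh |2*t|
    have := Real.exp_pos (-|2*t|)
    linarith
  have h3 := neg_abs_le (Real.sinh (2*t) * Real.cos θ)
  unfold ccS; linarith

lemma ccS_le {t : ℝ} (ht : |t| ≤ 2) (θ : ℝ) : ccS t θ ≤ Real.exp 4 := by
  have h1 : |Real.sinh (2*t) * Real.cos θ| ≤ |Real.sinh (2*t)| := by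
    rw [abs_mul]
    exact mul_le_of_le_one_right (abs_nonneg _) (Real.abs_cos_le_one θ)
  have h2 : Real.cosh (2*t) + |Real.sinh (2*t)| ≤ Real.exp 4 := by
    rw [Real.abs_sinh, ← Real.cosh_abs (2*t)]
    have h3 := Real.cosh_add_sinh |2*t|
    have h4 : Real.exp |2*t| ≤ Real.exp 4 := by
      apply Real.exp_le_exp.2
      rw [abs_mul, abs_two]; linarith
    linarith
  have h5 := le_abs_self (Real.sinh (2*t) * Real.cos θ)
  unfold ccS; linarith

lemma le_ccS {t : ℝ} (ht : |t| ≤ 2) (θ : ℝ) : Real.exp (-4) ≤ ccS t θ := by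
  have h1 : |Real.sinh (2*t) * Real.cos θ| ≤ |Real.sinh (2*t)| := by
    rw [abs_mul]
    exact mul_le_of_le_one_right (abs_nonneg _) (Real.abs_cos_le_one θ)
  have h2 : Real.exp (-4) ≤ Real.cosh (2*t) - |Real.sinh (2*t)| := by
    rw [Real.abs_sinh, ← Real.cosh_abs (2*t)]
    have h3 := Real.cosh_sub_sinh |2*t|
    have h4 : Real.exp (-4) ≤ Real.exp (-|2*t|) := by
      apply Real.exp_le_exp.2
      rw [abs_mul, abs_two]; linarith
    linarith
  have h3 := neg_abs_le (Real.sinh (2*t) * Real.cos θ)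
  unfold ccS; linarith

lemma ccS_rpow_le {t : ℝ} (ht : |t| ≤ 2) (θ q : ℝ) :
    ccS t θ ^ q ≤ Real.exp (4 * |q|) := by
  have hpos := ccS_pos t θ
  rw [Real.rpow_def_of_pos hpos]
  apply Real.exp_le_exp.2
  have hlog : |Real.log (ccS t θ)| ≤ 4 := by
    rw [abs_le]
    constructor
    · have := Real.log_le_log (Real.exp_pos (-4)) (le_ccS ht θ)
      rwa [Real.log_exp] at this
    · have := Real.log_le_log hpos (ccS_le ht θ)
      rwa [Real.log_exp] at this
  calc Real.log (ccS t θ) * q ≤ |Real.log (ccS t θ) * q| := le_abs_self _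
    _ = |Real.log (ccS t θ)| * |q| := abs_mul _ _
    _ ≤ 4 * |q| := by
        exact mul_le_mul_of_nonneg_right hlog (abs_nonneg q)

lemma cdS_abs {t : ℝ} (ht : |t| ≤ 2) (θ : ℝ) : |cdS t θ| ≤ 4 * Real.exp 4 := by
  have hs : |Real.sinh (2*t)| ≤ Real.exp 4 := by
    rw [Real.abs_sinh]
    have h3 := Real.cosh_add_sinh |2*t|
    have hc0 := Real.cosh_pos (|2*t|)
    have h4 : Real.exp |2*t| ≤ Real.exp 4 := by
      apply Real.exp_le_exp.2; rw [abs_mul, abs_two]; linarith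
    linarith
  have hc : Real.cosh (2*t) ≤ Real.exp 4 := by
    rw [← Real.cosh_abs (2*t)]
    have h3 := Real.cosh_add_sinh |2*t|
    have hs0 : 0 ≤ Real.sinh |2*t| := Real.sinh_nonneg_iff.2 (abs_nonneg _)
    have h4 : Real.exp |2*t| ≤ Real.exp 4 := by
      apply Real.exp_le_exp.2; rw [abs_mul, abs_two]; linarith
    linarith
  have h1 : |cdS t θ| ≤ |Real.sinh (2*t)| * 2 + Real.cosh (2*t) * 2 * |Real.cos θ| := by
    unfold cdS
    calc |Real.sinh (2*t) * 2 + Real.cosh (2*t) * 2 * Real.cos θ|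
        ≤ |Real.sinh (2*t) * 2| + |Real.cosh (2*t) * 2 * Real.cos θ| := abs_add_le _ _
      _ = |Real.sinh (2*t)| * 2 + Real.cosh (2*t) * 2 * |Real.cos θ| := by
          rw [abs_mul, abs_mul, abs_mul, abs_two,
            abs_of_pos (Real.cosh_pos (2*t))]
  have h2 : Real.cosh (2*t) * 2 * |Real.cos θ| ≤ Real.cosh (2*t) * 2 := by
    exact mul_le_of_le_one_right (by positivity) (Real.abs_cos_le_one θ)
  linarith

lemma ceS_abs {t : ℝ} (ht : |t| ≤ 2) (θ : ℝ) : |ceS t θ| ≤ 8 * Real.exp 4 := by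
  have hs : |Real.sinh (2*t)| ≤ Real.exp 4 := by
    rw [Real.abs_sinh]
    have h3 := Real.cosh_add_sinh |2*t|
    have hc0 := Real.cosh_pos (|2*t|)
    have h4 : Real.exp |2*t| ≤ Real.exp 4 := by
      apply Real.exp_le_exp.2; rw [abs_mul, abs_two]; linarith
    linarith
  have hc : Real.cosh (2*t) ≤ Real.exp 4 := by
    rw [← Real.cosh_abs (2*t)]
    have h3 := Real.cosh_add_sinh |2*t|
    have hs0 : 0 ≤ Real.sinh |2*t| := Real.sinh_nonneg_iff.2 (abs_nonneg _)
    have h4 : Real.exp |2*t| ≤ Real.exp 4 := by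
      apply Real.exp_le_exp.2; rw [abs_mul, abs_two]; linarith
    linarith
  have h1 : |ceS t θ| ≤ Real.cosh (2*t) * 4 + |Real.sinh (2*t)| * 4 * |Real.cos θ| := by
    unfold ceS
    calc |Real.cosh (2*t) * 2 * 2 + Real.sinh (2*t) * 2 * 2 * Real.cos θ|
        ≤ |Real.cosh (2*t) * 2 * 2| + |Real.sinh (2*t) * 2 * 2 * Real.cos θ| := abs_add_le _ _
      _ = Real.cosh (2*t) * 4 + |Real.sinh (2*t)| * 4 * |Real.cos θ| := by
          rw [abs_mul, abs_mul, abs_mul, abs_mul, abs_two,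
            abs_of_pos (Real.cosh_pos (2*t))]
          ring_nf
          rw [abs_mul, abs_two]
          ring
  have h2 : |Real.sinh (2*t)| * 4 * |Real.cos θ| ≤ |Real.sinh (2*t)| * 4 := by
    exact mul_le_of_le_one_right (by positivity) (Real.abs_cos_le_one θ)
  linarith

lemma hasDerivAt_ccS (t θ : ℝ) : HasDerivAt (fun t => ccS t θ) (cdS t θ) t := by
  have h2t : HasDerivAt (fun x : ℝ => 2 * x) 2 t := by
    simpa using (hasDerivAt_id t).const_mul (2:ℝ)
  have hcosh : HasDerivAt (fun t => Real.cosh (2*t)) (Real.sinh (2*t) * 2) t :=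
    (Real.hasDerivAt_cosh (2*t)).comp t h2t
  have hsinh : HasDerivAt (fun t => Real.sinh (2*t)) (Real.cosh (2*t) * 2) t :=
    (Real.hasDerivAt_sinh (2*t)).comp t h2t
  exact hcosh.add (hsinh.mul_const _)

lemma hasDerivAt_cdS (t θ : ℝ) : HasDerivAt (fun t => cdS t θ) (ceS t θ) t := by
  have h2t : HasDerivAt (fun x : ℝ => 2 * x) 2 t := by
    simpa using (hasDerivAt_id t).const_mul (2:ℝ)
  have hcosh : HasDerivAt (fun t => Real.cosh (2*t)) (Real.sinh (2*t) * 2) t :=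
    (Real.hasDerivAt_cosh (2*t)).comp t h2t
  have hsinh : HasDerivAt (fun t => Real.sinh (2*t)) (Real.cosh (2*t) * 2) t :=
    (Real.hasDerivAt_sinh (2*t)).comp t h2t
  exact ((hsinh.mul_const 2).add (((hcosh.mul_const 2).mul_const _)))

lemma continuous_ccS (t : ℝ) : Continuous (fun θ => ccS t θ) := by
  unfold ccS; fun_prop

lemma continuous_cdS (t : ℝ) : Continuous (fun θ => cdS t θ) := by
  unfold cdS; fun_prop

end StmtAux
section StmtAux2
lemma absEqS (s t θ : ℝ) :
    (‖(Real.sinh t : ℂ) * Complex.exp (θ * Complex.I) +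
        (Real.cosh t : ℂ)‖) ^ (-(1 + 2 * s))
      = ccS t θ ^ (-(1 + 2 * s)/2) := by
  have hz : (Real.sinh t : ℂ) * Complex.exp (θ * Complex.I) + (Real.cosh t : ℂ)
      = ((Real.sinh t * Real.cos θ + Real.cosh t : ℝ) : ℂ)
        + ((Real.sinh t * Real.sin θ : ℝ) : ℂ) * Complex.I := by
    rw [Complex.exp_mul_I, ← Complex.ofReal_cos, ← Complex.ofReal_sin]
    push_cast
    ring
  rw [hz, Complex.norm_def, Complex.normSq_add_mul_I]
  have hval : (Real.sinh t * Real.cos θ + Real.cosh t)^2 + (Real.sinh t * Real.sin θ)^2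
      = ccS t θ := by
    have h1 := Real.sin_sq_add_cos_sq θ
    have h2 := Real.cosh_two_mul t
    have h3 := Real.sinh_two_mul t
    unfold ccS; linear_combination Real.sinh t ^ 2 * h1 - h2 - Real.cos θ * h3
  rw [hval, Real.sqrt_eq_rpow, ← Real.rpow_mul (le_of_lt (ccS_pos t θ))]
  congr 1
  ring

lemma hasDerivAt_fS (p t θ : ℝ) :
    HasDerivAt (fun t => ccS t θ ^ p) (cdS t θ * p * ccS t θ ^ (p-1)) t :=
  (hasDerivAt_ccS t θ).rpow_const (Or.inl (ne_of_gt (ccS_pos t θ)))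

lemma hasDerivAt_f1S (p t θ : ℝ) :
    HasDerivAt (fun t => cdS t θ * p * ccS t θ ^ (p-1))
      (ceS t θ * p * ccS t θ ^ (p-1)
        + cdS t θ * p * (cdS t θ * (p-1) * ccS t θ ^ (p-1-1))) t :=
  ((hasDerivAt_cdS t θ).mul_const p).mul
    ((hasDerivAt_ccS t θ).rpow_const (Or.inl (ne_of_gt (ccS_pos t θ))))

lemma continuous_fS (p t : ℝ) : Continuous (fun θ => ccS t θ ^ p) :=
  (continuous_ccS t).rpow_const fun θ => Or.inl (ne_of_gt (ccS_pos t θ))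

lemma continuous_f1S (p t : ℝ) : Continuous (fun θ => cdS t θ * p * ccS t θ ^ (p-1)) :=
  (((continuous_cdS t).mul continuous_const).mul
    ((continuous_ccS t).rpow_const fun θ => Or.inl (ne_of_gt (ccS_pos t θ))))

lemma continuous_f2S (p t : ℝ) :
    Continuous (fun θ => ceS t θ * p * ccS t θ ^ (p-1)
      + cdS t θ * p * (cdS t θ * (p-1) * ccS t θ ^ (p-1-1))) := by
  have hce : Continuous (fun θ => ceS t θ) := by unfold ceS; fun_prop
  have h1 : Continuous (fun θ => ccS t θ ^ (p-1)) :=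
    (continuous_ccS t).rpow_const fun θ => Or.inl (ne_of_gt (ccS_pos t θ))
  have h2 : Continuous (fun θ => ccS t θ ^ (p-1-1)) :=
    (continuous_ccS t).rpow_const fun θ => Or.inl (ne_of_gt (ccS_pos t θ))
  exact ((hce.mul continuous_const).mul h1).add
    (((continuous_cdS t).mul continuous_const).mul
      (((continuous_cdS t).mul continuous_const).mul h2))

lemma f1_boundS (p : ℝ) {t : ℝ} (ht : |t| ≤ 2) (θ : ℝ) :
    |cdS t θ * p * ccS t θ ^ (p-1)| ≤ 4 * Real.exp 4 * |p| * Real.exp (4*|p-1|) := by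
  rw [abs_mul, abs_mul]
  have h1 := cdS_abs ht θ
  have h2 : |ccS t θ ^ (p-1)| ≤ Real.exp (4*|p-1|) := by
    rw [abs_of_nonneg (Real.rpow_nonneg (le_of_lt (ccS_pos t θ)) _)]
    exact ccS_rpow_le ht θ _
  have h3 : (0:ℝ) ≤ |cdS t θ| := abs_nonneg _
  have h4 : (0:ℝ) ≤ |p| := abs_nonneg _
  have h5 : (0:ℝ) ≤ |ccS t θ ^ (p-1)| := abs_nonneg _
  calc |cdS t θ| * |p| * |ccS t θ ^ (p-1)|
      ≤ (4 * Real.exp 4) * |p| * Real.exp (4*|p-1|) := by gcongr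
    _ = 4 * Real.exp 4 * |p| * Real.exp (4*|p-1|) := by ring

lemma f2_boundS (p : ℝ) {t : ℝ} (ht : |t| ≤ 2) (θ : ℝ) :
    |ceS t θ * p * ccS t θ ^ (p-1)
        + cdS t θ * p * (cdS t θ * (p-1) * ccS t θ ^ (p-1-1))|
      ≤ 8 * Real.exp 4 * |p| * Real.exp (4*|p-1|)
        + 4 * Real.exp 4 * |p| * (4 * Real.exp 4 * |p-1| * Real.exp (4*|p-1-1|)) := by
  have hA : |ceS t θ * p * ccS t θ ^ (p-1)| ≤ 8 * Real.exp 4 * |p| * Real.exp (4*|p-1|) := by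
    rw [abs_mul, abs_mul]
    have h1 := ceS_abs ht θ
    have h2 : |ccS t θ ^ (p-1)| ≤ Real.exp (4*|p-1|) := by
      rw [abs_of_nonneg (Real.rpow_nonneg (le_of_lt (ccS_pos t θ)) _)]
      exact ccS_rpow_le ht θ _
    calc |ceS t θ| * |p| * |ccS t θ ^ (p-1)|
        ≤ (8 * Real.exp 4) * |p| * Real.exp (4*|p-1|) := by gcongr
      _ = 8 * Real.exp 4 * |p| * Real.exp (4*|p-1|) := by ring
  have hB : |cdS t θ * p * (cdS t θ * (p-1) * ccS t θ ^ (p-1-1))|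
      ≤ 4 * Real.exp 4 * |p| * (4 * Real.exp 4 * |p-1| * Real.exp (4*|p-1-1|)) := by
    rw [abs_mul, abs_mul, abs_mul, abs_mul]
    have h1 := cdS_abs ht θ
    have h2 : |ccS t θ ^ (p-1-1)| ≤ Real.exp (4*|p-1-1|) := by
      rw [abs_of_nonneg (Real.rpow_nonneg (le_of_lt (ccS_pos t θ)) _)]
      exact ccS_rpow_le ht θ _
    calc |cdS t θ| * |p| * (|cdS t θ| * |p-1| * |ccS t θ ^ (p-1-1)|)
        ≤ (4 * Real.exp 4) * |p| * ((4 * Real.exp 4) * |p-1| * Real.exp (4*|p-1-1|)) := by gcongr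
      _ = 4 * Real.exp 4 * |p| * (4 * Real.exp 4 * |p-1| * Real.exp (4*|p-1-1|)) := by ring
  calc |ceS t θ * p * ccS t θ ^ (p-1)
        + cdS t θ * p * (cdS t θ * (p-1) * ccS t θ ^ (p-1-1))|
      ≤ |ceS t θ * p * ccS t θ ^ (p-1)|
        + |cdS t θ * p * (cdS t θ * (p-1) * ccS t θ ^ (p-1-1))| := abs_add_le _ _
    _ ≤ _ := add_le_add hA hB

end StmtAux2
section StmtAux3

lemma abs_le_two_of_ball {x₀ x : ℝ} (hx₀ : |x₀| < 1) (hx : x ∈ Metric.ball x₀ 1) :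
    |x| ≤ 2 := by
  rw [Metric.mem_ball, Real.dist_eq] at hx
  calc |x| = |(x - x₀) + x₀| := by ring_nf
    _ ≤ |x - x₀| + |x₀| := abs_add_le _ _
    _ ≤ 2 := by linarith

lemma hasDerivAt_US (p : ℝ) {x₀ : ℝ} (hx₀ : |x₀| < 1) :
    HasDerivAt (fun x => ∫ θ in (0:ℝ)..(2*Real.pi), ccS x θ ^ p)
      (∫ θ in (0:ℝ)..(2*Real.pi), cdS x₀ θ * p * ccS x₀ θ ^ (p-1)) x₀ := by
  have h := intervalIntegral.hasDerivAt_integral_of_dominated_loc_of_deriv_le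
    (𝕜 := ℝ) (μ := MeasureTheory.volume) (a := (0:ℝ)) (b := 2*Real.pi)
    (F := fun x θ => ccS x θ ^ p) (F' := fun x θ => cdS x θ * p * ccS x θ ^ (p-1))
    (x₀ := x₀) (s := Metric.ball x₀ 1)
    (bound := fun _ => 4 * Real.exp 4 * |p| * Real.exp (4*|p-1|))
    (Metric.ball_mem_nhds x₀ one_pos)
    (Filter.Eventually.of_forall fun x => (continuous_fS p x).aestronglyMeasurable)
    ((continuous_fS p x₀).intervalIntegrable _ _)
    ((continuous_f1S p x₀).aestronglyMeasurable)
    (Filter.Eventually.of_forall fun θ _ x hx =>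
      f1_boundS p (abs_le_two_of_ball hx₀ hx) θ)
    intervalIntegrable_const
    (Filter.Eventually.of_forall fun θ _ x _ => hasDerivAt_fS p x θ)
  exact h.2

lemma hasDerivAt_VS (p : ℝ) :
    HasDerivAt (fun x => ∫ θ in (0:ℝ)..(2*Real.pi), cdS x θ * p * ccS x θ ^ (p-1))
      (∫ θ in (0:ℝ)..(2*Real.pi),
        (ceS 0 θ * p * ccS 0 θ ^ (p-1)
          + cdS 0 θ * p * (cdS 0 θ * (p-1) * ccS 0 θ ^ (p-1-1)))) 0 := by
  have h0 : |(0:ℝ)| < 1 := by norm_num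
  have h := intervalIntegral.hasDerivAt_integral_of_dominated_loc_of_deriv_le
    (𝕜 := ℝ) (μ := MeasureTheory.volume) (a := (0:ℝ)) (b := 2*Real.pi)
    (F := fun x θ => cdS x θ * p * ccS x θ ^ (p-1))
    (F' := fun x θ => ceS x θ * p * ccS x θ ^ (p-1)
      + cdS x θ * p * (cdS x θ * (p-1) * ccS x θ ^ (p-1-1)))
    (x₀ := (0:ℝ)) (s := Metric.ball (0:ℝ) 1)
    (bound := fun _ => 8 * Real.exp 4 * |p| * Real.exp (4*|p-1|)
      + 4 * Real.exp 4 * |p| * (4 * Real.exp 4 * |p-1| * Real.exp (4*|p-1-1|)))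
    (Metric.ball_mem_nhds (0:ℝ) one_pos)
    (Filter.Eventually.of_forall fun x => (continuous_f1S p x).aestronglyMeasurable)
    ((continuous_f1S p 0).intervalIntegrable _ _)
    ((continuous_f2S p 0).aestronglyMeasurable)
    (Filter.Eventually.of_forall fun θ _ x hx =>
      f2_boundS p (abs_le_two_of_ball h0 hx) θ)
    intervalIntegrable_const
    (Filter.Eventually.of_forall fun θ _ x _ => hasDerivAt_f1S p x θ)
  exact h.2

lemma ccS_zero (θ : ℝ) : ccS 0 θ = 1 := by
  unfold ccS; simp

lemma cdS_zero (θ : ℝ) : cdS 0 θ = 2 * Real.cos θ := by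
  unfold cdS; norm_num [mul_comm]

lemma ceS_zero (θ : ℝ) : ceS 0 θ = 4 := by
  unfold ceS; norm_num

lemma intU0 (p : ℝ) : (∫ θ in (0:ℝ)..(2*Real.pi), ccS 0 θ ^ p) = 2*Real.pi := by
  have h : Set.EqOn (fun θ => ccS 0 θ ^ p) (fun _ => (1:ℝ)) (Set.uIcc 0 (2*Real.pi)) := by
    intro θ _
    simp [ccS_zero, Real.one_rpow]
  rw [intervalIntegral.integral_congr h]
  simp

lemma intV0 (p : ℝ) :
    (∫ θ in (0:ℝ)..(2*Real.pi), cdS 0 θ * p * ccS 0 θ ^ (p-1)) = 0 := by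
  have h : Set.EqOn (fun θ => cdS 0 θ * p * ccS 0 θ ^ (p-1))
      (fun θ => (2*p) * Real.cos θ) (Set.uIcc 0 (2*Real.pi)) := by
    intro θ _
    simp only [ccS_zero, cdS_zero, Real.one_rpow]
    ring
  rw [intervalIntegral.integral_congr h, intervalIntegral.integral_const_mul,
    integral_cos]
  simp [Real.sin_two_pi]

lemma intW0 (p : ℝ) :
    (∫ θ in (0:ℝ)..(2*Real.pi),
        (ceS 0 θ * p * ccS 0 θ ^ (p-1)
          + cdS 0 θ * p * (cdS 0 θ * (p-1) * ccS 0 θ ^ (p-1-1))))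
      = 4*Real.pi*p*(p+1) := by
  have h : Set.EqOn (fun θ => ceS 0 θ * p * ccS 0 θ ^ (p-1)
        + cdS 0 θ * p * (cdS 0 θ * (p-1) * ccS 0 θ ^ (p-1-1)))
      (fun θ => 4*p + (4*p*(p-1)) * Real.cos θ ^ 2) (Set.uIcc 0 (2*Real.pi)) := by
    intro θ _
    simp only [ccS_zero, cdS_zero, ceS_zero, Real.one_rpow]
    ring
  rw [intervalIntegral.integral_congr h]
  rw [intervalIntegral.integral_add (f := fun _ => 4*p) (g := fun x => 4*p*(p-1) * Real.cos x ^ 2) intervalIntegrable_const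
    ((continuous_const.mul (Real.continuous_cos.pow 2)).intervalIntegrable _ _)]
  rw [intervalIntegral.integral_const, intervalIntegral.integral_const_mul, integral_cos_sq]
  simp [Real.sin_two_pi, Real.cos_two_pi]
  ring

end StmtAux3
section StmtAux4

lemma littleo_sq_of_derivS {φ ψ : ℝ → ℝ} (h0 : φ 0 = 0)
    (hd : ∀ x ∈ Metric.ball (0:ℝ) 1, HasDerivAt φ (ψ x) x)
    (hψ : ψ =o[nhds 0] fun x => x) :
    φ =o[nhds 0] fun x : ℝ => x ^ 2 := by
  rw [Asymptotics.isLittleO_iff] at hψ ⊢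
  intro ε hε
  have h1 := hψ hε
  rw [Metric.eventually_nhds_iff] at h1 ⊢
  obtain ⟨δ, hδ, hb⟩ := h1
  refine ⟨min δ 1, by positivity, ?_⟩
  intro t ht
  rw [Real.dist_eq, sub_zero] at ht
  obtain ⟨htδ, ht1⟩ := lt_min_iff.1 ht
  have hsub : ∀ x ∈ Set.uIcc (0:ℝ) t, |x| ≤ |t| := by
    intro x hx
    rcases Set.mem_uIcc.1 hx with ⟨h1, h2⟩ | ⟨h1, h2⟩ <;>
      (rw [abs_le]; constructor <;> nlinarith [le_abs_self t, neg_abs_le t, abs_nonneg t])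
  have key := Convex.norm_image_sub_le_of_norm_hasDerivWithin_le
    (f := φ) (f' := ψ) (C := ε * |t|) (s := Set.uIcc (0:ℝ) t)
    (fun x hx => (hd x (by
      rw [Metric.mem_ball, Real.dist_eq, sub_zero]
      exact lt_of_le_of_lt (hsub x hx) ht1)).hasDerivWithinAt)
    (fun x hx => by
      have hxδ : dist x 0 < δ := by
        rw [Real.dist_eq, sub_zero]
        exact lt_of_le_of_lt (hsub x hx) htδ
      have h5 := hb hxδ
      refine le_trans h5 ?_
      have h6 : ‖x‖ ≤ |t| := by rw [Real.norm_eq_abs]; exact hsub x hx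
      exact mul_le_mul_of_nonneg_left h6 (le_of_lt hε))
    (convex_uIcc _ _) Set.left_mem_uIcc Set.right_mem_uIcc
  rw [h0, sub_zero, sub_zero] at key
  simp only [Real.norm_eq_abs] at key ⊢
  calc |φ t| ≤ ε * |t| * |t| := key
    _ = ε * |t ^ 2| := by rw [abs_pow]; ring

lemma mainS (p : ℝ) :
    (fun t : ℝ => (1/(2*Real.pi)) * (∫ θ in (0:ℝ)..(2*Real.pi), ccS t θ ^ p)
        - (1 + (p*(p+1)) * t^2))
      =o[nhds 0] (fun t : ℝ => t ^ 2) := by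
  have hπ : (0:ℝ) < Real.pi := Real.pi_pos
  apply littleo_sq_of_derivS
    (ψ := fun x => (1/(2*Real.pi)) * (∫ θ in (0:ℝ)..(2*Real.pi),
      cdS x θ * p * ccS x θ ^ (p-1)) - (p*(p+1)) * (2*x))
  · rw [intU0 p]
    field_simp
    ring
  · intro x hx
    have hx1 : |x| < 1 := by
      rw [Metric.mem_ball, Real.dist_eq, sub_zero] at hx
      exact hx
    have hU := (hasDerivAt_US p hx1).const_mul (1/(2*Real.pi))
    have h2 : HasDerivAt (fun t : ℝ => 1 + (p*(p+1)) * t^2) ((p*(p+1)) * (2*x)) x := by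
      have := ((hasDerivAt_pow 2 x).const_mul (p*(p+1))).const_add 1
      simpa using this
    exact hU.sub h2
  · have hψ0 : (1/(2*Real.pi)) * (∫ θ in (0:ℝ)..(2*Real.pi),
        cdS (0:ℝ) θ * p * ccS (0:ℝ) θ ^ (p-1)) - (p*(p+1)) * (2*(0:ℝ)) = 0 := by
      rw [intV0 p]; ring
    have h1 := (hasDerivAt_VS p).const_mul (1/(2*Real.pi))
    rw [intW0 p] at h1
    have h2 : HasDerivAt (fun x : ℝ => (p*(p+1)) * (2*x)) ((p*(p+1))*2) 0 := by
      simpa using ((hasDerivAt_id (0:ℝ)).const_mul 2).const_mul (p*(p+1))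
    have hd := h1.sub h2
    have hzero : (1/(2*Real.pi)) * (4*Real.pi*p*(p+1)) - (p*(p+1))*2 = 0 := by
      field_simp
      ring
    rw [hzero] at hd
    have h3 := hasDerivAt_iff_isLittleO.mp hd
    refine h3.congr' (Filter.Eventually.of_forall fun x => ?_)
      (Filter.Eventually.of_forall fun x => ?_)
    · simp only [Pi.sub_apply, smul_zero, sub_zero, hψ0]
    · simp

end StmtAux4

/-- Second-order expansion at `t = 0` of
`u(s,t) = (1/2π) ∫₀^{2π} |sinh t · e^{iθ} + cosh t|^{-(1+2s)} dθ`: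
`u(s,t) = 1 + (1+2s)(s/2 - 1/4) t² + o(t²)`. -/
theorem stmt_8 (s : ℝ) :
    (fun t : ℝ =>
        (1 / (2 * Real.pi)) *
            (∫ θ in (0 : ℝ)..(2 * Real.pi),
              (‖(Real.sinh t : ℂ) * Complex.exp (θ * Complex.I) +
                (Real.cosh t : ℂ)‖) ^ (-(1 + 2 * s))) -
          (1 + (1 + 2 * s) * (s / 2 - 1 / 4) * t ^ 2)) =o[nhds 0]
      (fun t : ℝ => t ^ 2) := by
  have key := mainS (-(1 + 2*s)/2)
  have hcoef : (-(1 + 2*s)/2) * ((-(1 + 2*s)/2) + 1) = (1 + 2*s) * (s/2 - 1/4) := by ring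
  have hEq : (fun t : ℝ =>
        (1 / (2 * Real.pi)) *
            (∫ θ in (0 : ℝ)..(2 * Real.pi),
              (‖(Real.sinh t : ℂ) * Complex.exp (θ * Complex.I) +
                (Real.cosh t : ℂ)‖) ^ (-(1 + 2 * s))) -
          (1 + (1 + 2 * s) * (s / 2 - 1 / 4) * t ^ 2))
      = (fun t : ℝ => (1/(2*Real.pi)) * (∫ θ in (0:ℝ)..(2*Real.pi), ccS t θ ^ (-(1 + 2*s)/2))
        - (1 + ((-(1 + 2*s)/2)*((-(1 + 2*s)/2) + 1)) * t^2)) := by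
    funext t
    rw [hcoef]
    have hint : (∫ θ in (0 : ℝ)..(2 * Real.pi),
        (‖(Real.sinh t : ℂ) * Complex.exp (θ * Complex.I) +
          (Real.cosh t : ℂ)‖) ^ (-(1 + 2 * s)))
        = ∫ θ in (0:ℝ)..(2*Real.pi), ccS t θ ^ (-(1 + 2*s)/2) := by
      apply intervalIntegral.integral_congr
      intro θ _
      exact absEqS s t θ
    rw [hint]
  rw [hEq]
  exact key
end

section
/- Let H be a Hilbert space (over ℝ or ℂ) and let T : H → H be an isometry of H that permutes an orthonormal basis (e_x)_{x∈X}, i.e. T e_x = e_{σ(x)} for a permutation σ of X. Suppose P ⊂ H is a 2-dimensional T-invariant subspace on which T acts as a rotation by angle α with α/π irrational. Then P = {0}, i.e. no such nonzero plane exists. Equivalently: if u₁, u₂ ∈ H are orthonormal with T u₁ = cos(α)u₁ + sin(α)u₂ and T u₂ = −sin(α)u₁ + cos(α)u₂ and α/π ∉ ℚ, then u₁ = u₂ = 0. -/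
/-- If an isometry `T` of a Hilbert space permutes an orthonormal (Hilbert) basis and
admits orthonormal vectors `u₁, u₂` spanning a `T`-invariant plane on which `T` acts as a
rotation by an angle `α` with `α/π` irrational, then `u₁ = u₂ = 0`
(i.e. no such nonzero plane exists). -/
theorem stmt_10 {H : Type*} [NormedAddCommGroup H] [InnerProductSpace ℝ H] [CompleteSpace H]
    {X : Type*} (e : HilbertBasis X ℝ H)
    (T : H ≃ₗᵢ[ℝ] H) (σ : Equiv.Perm X) (hT : ∀ x : X, T (e x) = e (σ x))
    (α : ℝ) (hα : Irrational (α / Real.pi))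
    (u₁ u₂ : H) (hu : Orthonormal ℝ ![u₁, u₂])
    (h1 : T u₁ = Real.cos α • u₁ + Real.sin α • u₂)
    (h2 : T u₂ = -Real.sin α • u₁ + Real.cos α • u₂) :
    u₁ = 0 ∧ u₂ = 0 := by
  classical
  set c : X → ℝ := fun x => inner ℝ (e x) u₁ with hc
  set d : X → ℝ := fun x => inner ℝ (e x) u₂ with hd
  set z : X → ℂ := fun x => ⟨c x, d x⟩ with hz
  -- key recursion
  have key : ∀ x, z (σ x) = Complex.exp (α * Complex.I) * z x := by
    intro x
    have e1 : c x = Real.cos α * c (σ x) + Real.sin α * d (σ x) := by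
      have := T.inner_map_map (e x) u₁
      rw [hT, h1, inner_add_right, real_inner_smul_right, real_inner_smul_right] at this
      simpa [hc, hd] using this.symm
    have e2 : d x = -Real.sin α * c (σ x) + Real.cos α * d (σ x) := by
      have := T.inner_map_map (e x) u₂
      rw [hT, h2, inner_add_right, real_inner_smul_right, real_inner_smul_right] at this
      simpa [hc, hd] using this.symm
    have hback : z x = Complex.exp (((-α : ℝ) : ℂ) * Complex.I) * z (σ x) := by
      apply Complex.ext <;>
        simp only [hz, Complex.mul_re, Complex.mul_im, Complex.exp_ofReal_mul_I_re,
          Complex.exp_ofReal_mul_I_im, Real.cos_neg, Real.sin_neg, e1, e2] <;> ring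
    rw [hback, ← mul_assoc, ← Complex.exp_add]
    push_cast
    ring_nf
    simp
  have hiter : ∀ (k : ℕ) (x : X), z ((σ ^ k) x) = Complex.exp ((k * α : ℝ) * Complex.I) * z x := by
    intro k
    induction k with
    | zero => simp
    | succ n ih =>
      intro x
      have hstep : (σ ^ (n + 1)) x = σ ((σ ^ n) x) := by
        rw [pow_succ', Equiv.Perm.mul_apply]
      rw [hstep, key, ih, ← mul_assoc, ← Complex.exp_add]
      push_cast
      ring_nf
  -- summability of the coefficient function
  have hsum : Summable fun x => ‖z x‖ ^ 2 := by
    have s1 : Summable fun x => c x * c x := by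
      have := lp.summable_inner (𝕜 := ℝ) (e.repr u₁) (e.repr u₁)
      simpa [hc, e.repr_apply_apply, real_inner_comm, ← sq] using this
    have s2 : Summable fun x => d x * d x := by
      have := lp.summable_inner (𝕜 := ℝ) (e.repr u₂) (e.repr u₂)
      simpa [hd, e.repr_apply_apply, real_inner_comm, ← sq] using this
    refine (s1.add s2).congr fun x => ?_
    rw [Complex.sq_norm, Complex.normSq_apply]
  -- every coefficient vanishes
  have hzero : ∀ x, z x = 0 := by
    intro x
    by_contra hzx
    by_cases hinj : Function.Injective (fun k : ℕ => (σ ^ k) x)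
    · -- infinite orbit: contradiction with summability
      have hconst : Summable fun _ : ℕ => ‖z x‖ ^ 2 := by
        refine (hsum.comp_injective hinj).congr fun k => ?_
        simp only [Function.comp_apply, hiter k x, norm_mul, Complex.norm_exp_ofReal_mul_I,
          one_mul]
      have h0 : ‖z x‖ ^ 2 = 0 := by
        have := hconst.tendsto_atTop_zero
        exact tendsto_nhds_unique tendsto_const_nhds this
      exact hzx (by simpa using (pow_eq_zero_iff (two_ne_zero)).mp h0)
    · -- finite orbit: periodicity contradicts irrationality
      rw [Function.Injective] at hinj
      push_neg at hinj
      obtain ⟨a, b, hab, hne⟩ := hinj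
      wlog hlt : a < b generalizing a b
      · exact this b a hab.symm hne.symm (by omega)
      set n : ℕ := b - a with hn
      have hb : n + a = b := by omega
      have hper : (σ ^ n) ((σ ^ a) x) = (σ ^ a) x := by
        calc (σ ^ n) ((σ ^ a) x) = (σ ^ (n + a)) x := by
              rw [pow_add, Equiv.Perm.mul_apply]
          _ = (σ ^ b) x := by rw [hb]
          _ = (σ ^ a) x := hab.symm
      have hz1 : Complex.exp ((n * α : ℝ) * Complex.I) = 1 := by
        have h3 := hiter n ((σ ^ a) x)
        rw [hper] at h3
        have hza : z ((σ ^ a) x) ≠ 0 := by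
          rw [hiter a x]
          exact mul_ne_zero (Complex.exp_ne_zero _) hzx
        have h4 : Complex.exp ((n * α : ℝ) * Complex.I) * z ((σ ^ a) x)
            = 1 * z ((σ ^ a) x) := by rw [one_mul, ← h3]
        exact mul_right_cancel₀ hza h4
      rw [Complex.exp_eq_one_iff] at hz1
      obtain ⟨m, hm⟩ := hz1
      have hI : ((n * α : ℝ) : ℂ) = (m : ℂ) * (2 * Real.pi) := by
        have h5 : ((n * α : ℝ) : ℂ) * Complex.I = ((m : ℂ) * (2 * Real.pi)) * Complex.I := by
          rw [hm]; push_cast; ring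
        exact mul_right_cancel₀ Complex.I_ne_zero h5
      have hreal : (n : ℝ) * α = m * (2 * Real.pi) := by
        exact_mod_cast hI
      have hn0 : (n : ℝ) ≠ 0 := by
        have : 0 < n := by omega
        positivity
      have hαπ : α / Real.pi = (2 * m : ℝ) / n := by
        field_simp at hreal ⊢
        rw [mul_comm] at hreal
        linarith [hreal]
      exact hα ⟨(2 * m : ℚ) / n, by rw [hαπ]; push_cast; ring⟩
  -- conclude
  have hrepr : ∀ (u : H), (∀ x, (inner ℝ (e x) u : ℝ) = 0) → u = 0 := by
    intro u hu0
    have : e.repr u = 0 := by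
      ext x
      simp [e.repr_apply_apply, hu0 x]
    simpa using e.repr.injective (by simpa using this)
  have hc0 : ∀ x, c x = 0 := fun x => congrArg Complex.re (hzero x)
  have hd0 : ∀ x, d x = 0 := fun x => congrArg Complex.im (hzero x)
  exact ⟨hrepr u₁ hc0, hrepr u₂ hd0⟩
end
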